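/- Let A ∈ ℝ^{n×n}, B ∈ ℝ^{n×m}, B₁ ∈ ℝ^{n×p}, and let Σ be a symmetric positive definite n×n matrix. Suppose there exists a symmetric n×n matrix Π such that A − BBᵀΠ is Hurwitz and (A − BBᵀΠ)Σ + Σ(A − BBᵀΠ)ᵀ + B₁B₁ᵀ = 0. Then K* := BᵀΠ satisfies: A − BK* is Hurwitz, (A − BK*)Σ + Σ(A − BK*)ᵀ + B₁B₁ᵀ = 0, and trace(K* Σ (K*)ᵀ) ≤ trace(K Σ Kᵀ) for every K ∈ ℝ^{m×n} such that A − BK is Hurwitz and (A − BK)Σ + Σ(A − BK)ᵀ + B₁B₁ᵀ = 0. -/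

import Mathlib

open Matrix

/-- The controllability matrix `[B, AB, A²B, …, A^{n−1}B]` (columns indexed by `Fin n × Fin m`). -/
def ctrbMatrix {n m : ℕ} (A : Matrix (Fin n) (Fin n) ℝ) (B : Matrix (Fin n) (Fin m) ℝ) :
    Matrix (Fin n) (Fin n × Fin m) ℝ :=
  Matrix.of fun i p => ((A ^ (p.1 : ℕ)) * B) i p.2

/-- `(A,B)` is a controllable pair iff the controllability matrix has rank `n`. -/
def IsControllablePair {n m : ℕ} (A : Matrix (Fin n) (Fin n) ℝ)
    (B : Matrix (Fin n) (Fin m) ℝ) : Prop :=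
  (ctrbMatrix A B).rank = n

/-- A real square matrix is Hurwitz iff all its (complex) eigenvalues have negative real part. -/
def IsHurwitz {n : ℕ} (F : Matrix (Fin n) (Fin n) ℝ) : Prop :=
  ∀ μ ∈ spectrum ℂ (F.map (algebraMap ℝ ℂ)), μ.re < 0

lemma trace_nonneg_of_posSemidef {n : ℕ} {M : Matrix (Fin n) (Fin n) ℝ}
    (hM : M.PosSemidef) : 0 ≤ M.trace := by
  rw [Matrix.trace]
  refine Finset.sum_nonneg fun i _ => ?_
  exact hM.diag_nonneg

/-- if a symmetric `Π` makes `A − BBᵀΠ` Hurwitz and satisfies the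
stationary Lyapunov equation for `Σ`, then `K* = BᵀΠ` is an optimal (minimum
`trace(KΣKᵀ)`) stabilizing gain among those maintaining `Σ`. -/
theorem stmt4 {n m p : ℕ} (A : Matrix (Fin n) (Fin n) ℝ) (B : Matrix (Fin n) (Fin m) ℝ)
    (B₁ : Matrix (Fin n) (Fin p) ℝ)
    (S : Matrix (Fin n) (Fin n) ℝ) (hS : S.PosDef)
    (P : Matrix (Fin n) (Fin n) ℝ) (hPsym : P.IsSymm)
    (hHur : IsHurwitz (A - B * Bᵀ * P))
    (hLyap : (A - B * Bᵀ * P) * S + S * (A - B * Bᵀ * P)ᵀ + B₁ * B₁ᵀ = 0) :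
    IsHurwitz (A - B * (Bᵀ * P)) ∧
    (A - B * (Bᵀ * P)) * S + S * (A - B * (Bᵀ * P))ᵀ + B₁ * B₁ᵀ = 0 ∧
    ∀ K : Matrix (Fin m) (Fin n) ℝ, IsHurwitz (A - B * K) →
      (A - B * K) * S + S * (A - B * K)ᵀ + B₁ * B₁ᵀ = 0 →
      ((Bᵀ * P) * S * (Bᵀ * P)ᵀ).trace ≤ (K * S * Kᵀ).trace := by
  have hassoc : B * Bᵀ * P = B * (Bᵀ * P) := Matrix.mul_assoc B Bᵀ P
  refine ⟨by rw [← hassoc]; exact hHur, by rw [← hassoc]; exact hLyap, ?_⟩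
  intro K hKH hK
  set D : Matrix (Fin m) (Fin n) ℝ := K - Bᵀ * P with hD
  have e : (A - B * K) * S + S * (A - B * K)ᵀ
      = (A - B * (Bᵀ * P)) * S + S * (A - B * (Bᵀ * P))ᵀ := by
    have h1 := eq_neg_of_add_eq_zero_left hK
    have h2 := eq_neg_of_add_eq_zero_left (hassoc ▸ hLyap)
    rw [h1, h2]
  have hrel : B * D * S + S * Dᵀ * Bᵀ = 0 := by
    have h3 : ((A - B * K) * S + S * (A - B * K)ᵀ)
        - ((A - B * (Bᵀ * P)) * S + S * (A - B * (Bᵀ * P))ᵀ) = 0 := sub_eq_zero.mpr e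
    have h4 : B * D * S + S * Dᵀ * Bᵀ
        = -(((A - B * K) * S + S * (A - B * K)ᵀ)
          - ((A - B * (Bᵀ * P)) * S + S * (A - B * (Bᵀ * P))ᵀ)) := by
      simp only [hD, transpose_sub, transpose_mul, transpose_transpose, Matrix.sub_mul,
        Matrix.mul_sub, Matrix.mul_assoc]
      abel
    rw [h4, h3, neg_zero]
  have hcross : ((Bᵀ * P) * S * Dᵀ).trace + (D * S * (Bᵀ * P)ᵀ).trace = 0 := by
    have h5 : (P * (B * D * S) + P * (S * Dᵀ * Bᵀ)).trace = 0 := by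
      rw [← mul_add, hrel, mul_zero, trace_zero]
    rw [trace_add] at h5
    have t1 : ((Bᵀ * P) * S * Dᵀ).trace = (P * (S * Dᵀ * Bᵀ)).trace := by
      have ha : (Bᵀ * P) * S * Dᵀ = Bᵀ * (P * (S * Dᵀ)) := by simp only [Matrix.mul_assoc]
      rw [ha, trace_mul_comm, Matrix.mul_assoc P (S * Dᵀ) Bᵀ, Matrix.mul_assoc S Dᵀ Bᵀ]
    have t2 : (D * S * (Bᵀ * P)ᵀ).trace = (P * (B * D * S)).trace := by
      rw [transpose_mul, transpose_transpose, trace_mul_cycle, hPsym.eq]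
      simp only [Matrix.mul_assoc]
    rw [t1, t2]; linarith
  have hpos : 0 ≤ (D * S * Dᵀ).trace := by
    have h6 := hS.posSemidef.mul_mul_conjTranspose_same D
    rw [conjTranspose_eq_transpose_of_trivial] at h6
    exact trace_nonneg_of_posSemidef h6
  have expand : K * S * Kᵀ
      = (Bᵀ * P) * S * (Bᵀ * P)ᵀ + ((Bᵀ * P) * S * Dᵀ + D * S * (Bᵀ * P)ᵀ) + D * S * Dᵀ := by
    simp only [hD, transpose_sub, transpose_mul, transpose_transpose, Matrix.sub_mul,
      Matrix.mul_sub, Matrix.add_mul, Matrix.mul_add, Matrix.mul_assoc]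
    abel
  have : (K * S * Kᵀ).trace = ((Bᵀ * P) * S * (Bᵀ * P)ᵀ).trace + (D * S * Dᵀ).trace := by
    rw [expand, trace_add, trace_add, trace_add, hcross]; ring
  linarith
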